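/- Let f(X) = a₀X⁴ + 4a₁X³ + 6a₂X² + 4a₃X + a₄ be a real quartic polynomial and let σ ∈ {1, -1}. Suppose x, y : ℝ → ℝ are differentiable on an open interval I, that f(x(t)) > 0, f(y(t)) > 0 and x(t) ≠ y(t) for all t ∈ I, and that x'(t) = √(f(x(t))) and y'(t) = σ·√(f(y(t))) on I. Then the function t ↦ ((√(f(x(t))) + σ·√(f(y(t))))/(x(t) − y(t)))² − a₀(x(t) + y(t))² − 4a₁(x(t) + y(t)) is constant on I. -/

import Mathlib

private lemma euler_key (a₀ a₁ a₂ a₃ a₄ σ u v p q : ℝ)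
    (hσ2 : σ ^ 2 = 1)
    (hp : p ^ 2 = a₀ * u ^ 4 + 4 * a₁ * u ^ 3 + 6 * a₂ * u ^ 2 + 4 * a₃ * u + a₄)
    (hq : q ^ 2 = a₀ * v ^ 4 + 4 * a₁ * v ^ 3 + 6 * a₂ * v ^ 2 + 4 * a₃ * v + a₄)
    (hd : u - v ≠ 0) :
    2 * ((p + σ * q) / (u - v)) ^ (2 - 1) *
        ((((4 * a₀ * u ^ 3 + 12 * a₁ * u ^ 2 + 12 * a₂ * u + 4 * a₃) / 2
            + σ * (σ * (4 * a₀ * v ^ 3 + 12 * a₁ * v ^ 2 + 12 * a₂ * v + 4 * a₃) / 2))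
              * (u - v)
          - (p + σ * q) * (p - σ * q)) / (u - v) ^ 2)
      - a₀ * (2 * (u + v) ^ (2 - 1) * (p + σ * q))
      - 4 * a₁ * (p + σ * q) = 0 := by
  have h3 : ((4 * a₀ * u ^ 3 + 12 * a₁ * u ^ 2 + 12 * a₂ * u + 4 * a₃) / 2
        + σ * (σ * (4 * a₀ * v ^ 3 + 12 * a₁ * v ^ 2 + 12 * a₂ * v + 4 * a₃) / 2)) * (u - v)
        - (p + σ * q) * (p - σ * q)
      = (u - v) ^ 3 * (a₀ * (u + v) + 2 * a₁) := by
    linear_combination (-1 : ℝ) * hp + σ ^ 2 * hq +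
      ((4 * a₀ * v ^ 3 + 12 * a₁ * v ^ 2 + 12 * a₂ * v + 4 * a₃) / 2 * (u - v)
        + (a₀ * v ^ 4 + 4 * a₁ * v ^ 3 + 6 * a₂ * v ^ 2 + 4 * a₃ * v + a₄)) * hσ2
  rw [h3]
  norm_num
  field_simp
  ring

/-- **Euler's lemma** (Lemma A.1): if `x' = √(f(x))` and `y' = σ·√(f(y))` on an open
interval, with `f(x) > 0`, `f(y) > 0` and `x ≠ y` there, then
`((√(f(x)) + σ√(f(y)))/(x − y))² − a₀(x+y)² − 4a₁(x+y)` is constant on that interval. -/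
theorem euler_lemma_integral_constant
    (a₀ a₁ a₂ a₃ a₄ : ℝ) (σ : ℝ) (hσ : σ = 1 ∨ σ = -1)
    (f : ℝ → ℝ)
    (hf : f = fun X => a₀ * X ^ 4 + 4 * a₁ * X ^ 3 + 6 * a₂ * X ^ 2 + 4 * a₃ * X + a₄)
    (A B : ℝ) (x y : ℝ → ℝ)
    (hx : ∀ t ∈ Set.Ioo A B, HasDerivAt x (Real.sqrt (f (x t))) t)
    (hy : ∀ t ∈ Set.Ioo A B, HasDerivAt y (σ * Real.sqrt (f (y t))) t)
    (hfx : ∀ t ∈ Set.Ioo A B, 0 < f (x t))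
    (hfy : ∀ t ∈ Set.Ioo A B, 0 < f (y t))
    (hxy : ∀ t ∈ Set.Ioo A B, x t ≠ y t) :
    ∀ t₁ ∈ Set.Ioo A B, ∀ t₂ ∈ Set.Ioo A B,
      ((Real.sqrt (f (x t₁)) + σ * Real.sqrt (f (y t₁))) / (x t₁ - y t₁)) ^ 2
          - a₀ * (x t₁ + y t₁) ^ 2 - 4 * a₁ * (x t₁ + y t₁)
        = ((Real.sqrt (f (x t₂)) + σ * Real.sqrt (f (y t₂))) / (x t₂ - y t₂)) ^ 2
          - a₀ * (x t₂ + y t₂) ^ 2 - 4 * a₁ * (x t₂ + y t₂) := by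
  have hσ2 : σ ^ 2 = 1 := by rcases hσ with h | h <;> rw [h] <;> norm_num
  set g : ℝ → ℝ := fun t =>
    ((Real.sqrt (f (x t)) + σ * Real.sqrt (f (y t))) / (x t - y t)) ^ 2
      - a₀ * (x t + y t) ^ 2 - 4 * a₁ * (x t + y t) with hg
  have hderiv : ∀ t ∈ Set.Ioo A B, HasDerivAt g 0 t := by
    intro t ht
    have hpu : 0 < f (x t) := hfx t ht
    have hpv : 0 < f (y t) := hfy t ht
    have hd : x t - y t ≠ 0 := sub_ne_zero_of_ne (hxy t ht)
    set u := x t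
    set v := y t
    set p := Real.sqrt (f u) with hpdef
    set q := Real.sqrt (f v) with hqdef
    have hppos : 0 < p := Real.sqrt_pos.mpr hpu
    have hqpos : 0 < q := Real.sqrt_pos.mpr hpv
    have hp2 : p ^ 2 = f u := Real.sq_sqrt hpu.le
    have hq2 : q ^ 2 = f v := Real.sq_sqrt hpv.le
    -- derivative of f at a point
    have hfd : ∀ w : ℝ, HasDerivAt f (4 * a₀ * w ^ 3 + 12 * a₁ * w ^ 2 + 12 * a₂ * w + 4 * a₃) w := by
      intro w
      rw [hf]
      have h := (((((hasDerivAt_pow 4 w).const_mul a₀).add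
        ((hasDerivAt_pow 3 w).const_mul (4 * a₁))).add
        ((hasDerivAt_pow 2 w).const_mul (6 * a₂))).add
        ((hasDerivAt_id w).const_mul (4 * a₃))).add_const a₄
      have hfun : (fun X : ℝ => a₀ * X ^ 4 + 4 * a₁ * X ^ 3 + 6 * a₂ * X ^ 2 + 4 * a₃ * X + a₄)
          = fun X : ℝ => a₀ * X ^ 4 + 4 * a₁ * X ^ 3 + 6 * a₂ * X ^ 2 + 4 * a₃ * id X + a₄ := by
        funext X; simp [id]
      rw [hfun]
      refine h.congr_deriv ?_
      push_cast
      ring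
    set du := 4 * a₀ * u ^ 3 + 12 * a₁ * u ^ 2 + 12 * a₂ * u + 4 * a₃ with hdu
    set dv := 4 * a₀ * v ^ 3 + 12 * a₁ * v ^ 2 + 12 * a₂ * v + 4 * a₃ with hdv
    -- derivative of √(f(x t))
    have hsx : HasDerivAt (fun s => Real.sqrt (f (x s))) (du / 2) t := by
      have h := (Real.hasDerivAt_sqrt hpu.ne').comp t ((hfd u).comp t (hx t ht))
      refine h.congr_deriv ?_
      rw [← hpdef]
      field_simp
      ring
    have hsy : HasDerivAt (fun s => Real.sqrt (f (y s))) (σ * dv / 2) t := by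
      have h := (Real.hasDerivAt_sqrt hpv.ne').comp t ((hfd v).comp t (hy t ht))
      refine h.congr_deriv ?_
      rw [← hqdef]
      field_simp
      ring
    have hN : HasDerivAt (fun s => Real.sqrt (f (x s)) + σ * Real.sqrt (f (y s)))
        (du / 2 + σ * (σ * dv / 2)) t := hsx.add (hsy.const_mul σ)
    have hD : HasDerivAt (fun s => x s - y s) (p - σ * q) t := (hx t ht).sub (hy t ht)
    have hQ : HasDerivAt (fun s => (Real.sqrt (f (x s)) + σ * Real.sqrt (f (y s))) / (x s - y s))
        (((du / 2 + σ * (σ * dv / 2)) * (u - v) - (p + σ * q) * (p - σ * q)) / (u - v) ^ 2) t :=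
      hN.div hD hd
    have hQ2 := hQ.pow 2
    have hS : HasDerivAt (fun s => x s + y s) (p + σ * q) t := (hx t ht).add (hy t ht)
    have hS2 := hS.pow 2
    have htotal := (hQ2.sub ((hS2.const_mul a₀))).sub (hS.const_mul (4 * a₁))
    have hzero :
        2 * ((p + σ * q) / (u - v)) ^ (2 - 1) *
            (((du / 2 + σ * (σ * dv / 2)) * (u - v) - (p + σ * q) * (p - σ * q)) / (u - v) ^ 2)
          - a₀ * (2 * (u + v) ^ (2 - 1) * (p + σ * q)) - 4 * a₁ * (p + σ * q) = 0 := by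
      have hp2' : p ^ 2 = a₀ * u ^ 4 + 4 * a₁ * u ^ 3 + 6 * a₂ * u ^ 2 + 4 * a₃ * u + a₄ := by
        rw [hp2, hf]
      have hq2' : q ^ 2 = a₀ * v ^ 4 + 4 * a₁ * v ^ 3 + 6 * a₂ * v ^ 2 + 4 * a₃ * v + a₄ := by
        rw [hq2, hf]
      exact euler_key a₀ a₁ a₂ a₃ a₄ σ u v p q hσ2 hp2' hq2' hd
    refine htotal.congr_deriv ?_
    push_cast
    linear_combination hzero
  -- constancy
  have key : ∀ t₁ ∈ Set.Ioo A B, ∀ t₂ ∈ Set.Ioo A B, t₁ ≤ t₂ → g t₁ = g t₂ := by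
    intro t₁ h₁ t₂ h₂ h12
    have hsub : Set.Icc t₁ t₂ ⊆ Set.Ioo A B := Set.Icc_subset_Ioo h₁.1 h₂.2
    have hcont : ContinuousOn g (Set.Icc t₁ t₂) := fun s hs =>
      ((hderiv s (hsub hs)).continuousAt).continuousWithinAt
    have hdr : ∀ s ∈ Set.Ico t₁ t₂, HasDerivWithinAt g 0 (Set.Ici s) s := fun s hs =>
      (hderiv s (hsub ⟨hs.1, hs.2.le⟩)).hasDerivWithinAt
    exact (constant_of_has_deriv_right_zero hcont hdr t₂ ⟨h12, le_rfl⟩).symm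
  intro t₁ h₁ t₂ h₂
  rcases le_total t₁ t₂ with h | h
  · exact key t₁ h₁ t₂ h₂ h
  · exact (key t₂ h₂ t₁ h₁ h).symm
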